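/- One-variable elliptic Karlsson–Minton summation (Corollary 4.10 with m arbitrary): let [·] be a nonzero entire odd function satisfying the Riemann relation, δ ∈ ℂ* generic. Let α ∈ ℕ^m with |α| = M, x = (x₁,…,x_m) and u, v complex parameters, all generic. Then the terminating very-well-poised series _{2m+8}V_{2m+7}(2u; u+v, u-v, (u+δ/2+x_i+α_iδ, u+δ/2-x_i)_{1≤i≤m}, -Mδ) = ([u+δ+u]_M [u+δ-u]_M / ([u+δ+v]_M [u+δ-v]_M)) · ∏_{i=1}^m ([x_i+δ/2+v]_{α_i}[x_i+δ/2-v]_{α_i} / ([x_i+δ/2+u]_{α_i}[x_i+δ/2-u]_{α_i})). -/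

import Mathlib

open Finset

/-- Shifted factorial `[u]_k = [u][u+δ]⋯[u+(k-1)δ]`. -/
noncomputable def shiftedFac (f : ℂ → ℂ) (δ : ℂ) (u : ℂ) (k : ℕ) : ℂ :=
  ∏ r ∈ Finset.range k, f (u + (r : ℂ) * δ)

/-- The terminating very-well-poised series `_{r+5}V_{r+4}(α₀; (α_i)_{i∈ι})`,
truncated at `k = K` (equal to the full series when some `α_i = -Kδ`). -/
noncomputable def Vseries (f : ℂ → ℂ) (δ : ℂ) (K : ℕ) (α₀ : ℂ)
    {ι : Type*} [Fintype ι] (α : ι → ℂ) : ℂ :=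
  ∑ k ∈ Finset.range (K + 1),
    (f (α₀ + 2 * (k : ℂ) * δ) / f α₀) * (shiftedFac f δ α₀ k / shiftedFac f δ δ k) *
      ∏ i, shiftedFac f δ (α i) k / shiftedFac f δ (δ + α₀ - α i) k

/-- The `2m+3` upper parameters
`u+v, u-v, (u+δ/2+x_i+α_iδ, u+δ/2-x_i)_{1≤i≤m}, -Mδ` of the
`_{2m+8}V_{2m+7}` series. -/
noncomputable def KMargs (δ u v : ℂ) {m : ℕ} (x : Fin m → ℂ) (α : Fin m → ℕ)
    (M : ℕ) : Fin 2 ⊕ (Fin m × Fin 2) ⊕ Fin 1 → ℂ :=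
  Sum.elim ![u + v, u - v]
    (Sum.elim
      (fun p => if p.2 = 0 then u + δ / 2 + x p.1 + (α p.1 : ℂ) * δ
        else u + δ / 2 - x p.1)
      ![-(M : ℂ) * δ])

namespace KMaux
variable {f : ℂ → ℂ} {δ : ℂ}

noncomputable def Ep (f : ℂ → ℂ) (w a : ℂ) : ℂ := f (w + a) * f (w - a)

noncomputable def gt (f : ℂ → ℂ) (δ c w : ℂ) (n : ℕ) : ℂ :=
  ∏ r ∈ Finset.range n, Ep f w (c + (r : ℂ) * δ)

theorem sf_add (f : ℂ → ℂ) (δ a : ℂ) (j k : ℕ) :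
    shiftedFac f δ a (j + k) = shiftedFac f δ a j * shiftedFac f δ (a + j * δ) k := by
  unfold shiftedFac
  rw [Finset.prod_range_add]
  congr 1
  refine Finset.prod_congr rfl fun r _ => ?_
  congr 1; push_cast; ring

theorem sf_one (f : ℂ → ℂ) (δ a : ℂ) : shiftedFac f δ a 1 = f a := by
  simp [shiftedFac]

theorem sf_congr (f : ℂ → ℂ) (δ : ℂ) {a b : ℂ} (k : ℕ) (h : a = b) :
    shiftedFac f δ a k = shiftedFac f δ b k := by rw [h]

theorem sf_reflect (hodd : ∀ u : ℂ, f (-u) = -f u) (c : ℂ) (n : ℕ) :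
    shiftedFac f δ (δ - c - n * δ) n = (-1) ^ n * shiftedFac f δ c n := by
  unfold shiftedFac
  rw [← Finset.prod_range_reflect (fun r => f (c + (r : ℂ) * δ)) n]
  have : ∀ r ∈ Finset.range n, f (δ - c - n * δ + r * δ)
      = -1 * f (c + ((n - 1 - r : ℕ) : ℂ) * δ) := by
    intro r hr
    rw [Finset.mem_range] at hr
    have h1 : ((n - 1 - r : ℕ) : ℂ) = (n : ℂ) - 1 - r := by
      have e : n - 1 - r = n - (1 + r) := by omega
      rw [e, Nat.cast_sub (by omega)]; push_cast; ring
    rw [h1]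
    have h2 : δ - c - n * δ + r * δ = -(c + ((n : ℂ) - 1 - r) * δ) := by ring
    rw [h2, hodd]; ring
  rw [Finset.prod_congr rfl this, Finset.prod_mul_distrib, Finset.prod_const,
    Finset.card_range]

theorem erase_split {M s : ℕ} (hs : s ≤ M) (g : ℕ → ℂ) :
    ∏ l ∈ (Finset.range (M + 1)).erase s, g l
      = (∏ l ∈ Finset.range s, g l) * ∏ l ∈ Finset.Ico (s + 1) (M + 1), g l := by
  rw [← Finset.prod_union (by simp [Finset.disjoint_left, Finset.mem_Ico]; omega)]
  refine Finset.prod_congr ?_ fun _ _ => rfl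
  ext l
  simp only [Finset.mem_erase, Finset.mem_range, Finset.mem_union, Finset.mem_Ico]
  omega

theorem vpart (u t : ℂ) {M s : ℕ} (hs : s ≤ M) :
    shiftedFac f δ (u + t) s * shiftedFac f δ (u + δ + t) M
      = shiftedFac f δ (u + δ + t) s *
          ∏ l ∈ (Finset.range (M + 1)).erase s, f (u + t + (l : ℂ) * δ) := by
  rw [erase_split hs]
  have hA : ∏ l ∈ Finset.range s, f (u + t + (l : ℂ) * δ) = shiftedFac f δ (u + t) s := rfl
  have hB : ∏ l ∈ Finset.Ico (s + 1) (M + 1), f (u + t + (l : ℂ) * δ)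
      = shiftedFac f δ (u + δ + t + s * δ) (M - s) := by
    rw [Finset.prod_Ico_eq_prod_range]
    have : M + 1 - (s + 1) = M - s := by omega
    rw [this]
    refine Finset.prod_congr rfl fun r _ => ?_
    congr 1; push_cast; ring
  have hM : shiftedFac f δ (u + δ + t) M
      = shiftedFac f δ (u + δ + t) s * shiftedFac f δ (u + δ + t + s * δ) (M - s) := by
    rw [← sf_add]; congr 1; omega
  rw [hA, hB, hM]; ring

theorem upart (u : ℂ) {M s : ℕ} (hs : s ≤ M) :
    f (2 * u + 2 * s * δ) * shiftedFac f δ (2 * u) s *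
        ∏ l ∈ (Finset.range (M + 1)).erase s, f (2 * u + ((s : ℂ) + l) * δ)
      = f (2 * u) * shiftedFac f δ (2 * u + ((M : ℂ) + 1) * δ) s *
          shiftedFac f δ (2 * u + δ) M := by
  have hmul := Finset.mul_prod_erase (Finset.range (M + 1))
    (fun l => f (2 * u + ((s : ℂ) + l) * δ)) (Finset.mem_range.mpr (by omega : s < M + 1))
  have hfull : ∏ l ∈ Finset.range (M + 1), f (2 * u + ((s : ℂ) + l) * δ)
      = shiftedFac f δ (2 * u + s * δ) (M + 1) := by
    refine Finset.prod_congr rfl fun r _ => ?_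
    congr 1; ring
  have h1 : f (2 * u + ((s : ℂ) + s) * δ) = f (2 * u + 2 * s * δ) := by congr 1; ring
  have h2 : shiftedFac f δ (2 * u) s * shiftedFac f δ (2 * u + s * δ) (M + 1)
      = shiftedFac f δ (2 * u) (s + (M + 1)) := (sf_add f δ (2 * u) s (M + 1)).symm
  have h3 : shiftedFac f δ (2 * u) (s + (M + 1))
      = shiftedFac f δ (2 * u) (1 + M) * shiftedFac f δ (2 * u + ((1 + M : ℕ) : ℂ) * δ) s := by
    rw [← sf_add]; congr 1; omega
  have h4 : shiftedFac f δ (2 * u) (1 + M) = f (2 * u) * shiftedFac f δ (2 * u + δ) M := by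
    rw [sf_add, sf_one]; congr 2; push_cast; ring
  calc f (2 * u + 2 * s * δ) * shiftedFac f δ (2 * u) s *
        ∏ l ∈ (Finset.range (M + 1)).erase s, f (2 * u + ((s : ℂ) + l) * δ)
      = shiftedFac f δ (2 * u) s * (f (2 * u + ((s : ℂ) + s) * δ) *
          ∏ l ∈ (Finset.range (M + 1)).erase s, f (2 * u + ((s : ℂ) + l) * δ)) := by
        rw [h1]; ring
    _ = shiftedFac f δ (2 * u) s * shiftedFac f δ (2 * u + s * δ) (M + 1) := by
        rw [hmul, hfull]
    _ = shiftedFac f δ (2 * u) (1 + M) * shiftedFac f δ (2 * u + ((1 + M : ℕ) : ℂ) * δ) s := by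
        rw [h2, h3]
    _ = f (2 * u) * shiftedFac f δ (2 * u + ((M : ℂ) + 1) * δ) s *
          shiftedFac f δ (2 * u + δ) M := by
        rw [h4, sf_congr f δ s (show 2 * u + ((1 + M : ℕ) : ℂ) * δ = 2 * u + ((M : ℂ) + 1) * δ
          by push_cast; ring)]
        ring

theorem dpart (hodd : ∀ u : ℂ, f (-u) = -f u) {M s : ℕ} (hs : s ≤ M) :
    shiftedFac f δ (-(M : ℂ) * δ) s *
        ∏ l ∈ (Finset.range (M + 1)).erase s, f (((s : ℂ) - l) * δ)
      = (-1) ^ M * shiftedFac f δ δ s * shiftedFac f δ δ M := by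
  rw [erase_split hs]
  have hA : ∏ l ∈ Finset.range s, f (((s : ℂ) - l) * δ) = shiftedFac f δ δ s := by
    unfold shiftedFac
    rw [← Finset.prod_range_reflect (fun r => f (δ + (r : ℂ) * δ)) s]
    refine Finset.prod_congr rfl fun l hl => ?_
    rw [Finset.mem_range] at hl
    have h1 : ((s - 1 - l : ℕ) : ℂ) = (s : ℂ) - 1 - l := by
      have e : s - 1 - l = s - (1 + l) := by omega
      rw [e, Nat.cast_sub (by omega)]; push_cast; ring
    congr 1; rw [h1]; ring
  have hB : ∏ l ∈ Finset.Ico (s + 1) (M + 1), f (((s : ℂ) - l) * δ)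
      = (-1) ^ (M - s) * shiftedFac f δ δ (M - s) := by
    rw [Finset.prod_Ico_eq_prod_range]
    have e : M + 1 - (s + 1) = M - s := by omega
    rw [e]
    have : ∀ r ∈ Finset.range (M - s), f (((s : ℂ) - (s + 1 + r : ℕ)) * δ)
        = -1 * f (δ + (r : ℂ) * δ) := by
      intro r _
      have h2 : ((s : ℂ) - (s + 1 + r : ℕ)) * δ = -(δ + (r : ℂ) * δ) := by push_cast; ring
      rw [h2, hodd]; ring
    rw [Finset.prod_congr rfl this, Finset.prod_mul_distrib, Finset.prod_const,
      Finset.card_range]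
    rfl
  have hC : shiftedFac f δ (-(M : ℂ) * δ) s
      = (-1) ^ s * shiftedFac f δ (δ + ((M - s : ℕ) : ℂ) * δ) s := by
    rw [← sf_reflect hodd]
    refine sf_congr f δ s ?_
    rw [Nat.cast_sub hs]; push_cast; ring
  have hD : shiftedFac f δ δ (M - s) * shiftedFac f δ (δ + ((M - s : ℕ) : ℂ) * δ) s
      = shiftedFac f δ δ M := by
    rw [← sf_add]; congr 1; omega
  rw [hA, hB, hC]
  calc (-1) ^ s * shiftedFac f δ (δ + ((M - s : ℕ) : ℂ) * δ) s *
        (shiftedFac f δ δ s * ((-1) ^ (M - s) * shiftedFac f δ δ (M - s)))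
      = ((-1) ^ s * (-1) ^ (M - s)) * shiftedFac f δ δ s *
          (shiftedFac f δ δ (M - s) * shiftedFac f δ (δ + ((M - s : ℕ) : ℂ) * δ) s) := by ring
    _ = (-1) ^ M * shiftedFac f δ δ s * shiftedFac f δ δ M := by
        rw [hD, ← pow_add]; congr 3; omega

theorem claimD (hodd : ∀ u : ℂ, f (-u) = -f u) (u v : ℂ) {M s : ℕ} (hs : s ≤ M) :
    f (2 * u + 2 * s * δ) * shiftedFac f δ (2 * u) s * shiftedFac f δ (u + v) s *
        shiftedFac f δ (u - v) s * shiftedFac f δ (-(M : ℂ) * δ) s *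
        (∏ l ∈ (Finset.range (M + 1)).erase s, Ep f (u + s * δ) (u + (l : ℂ) * δ)) *
        (shiftedFac f δ (u + δ + v) M * shiftedFac f δ (u + δ - v) M)
      = f (2 * u) * shiftedFac f δ δ s * shiftedFac f δ (u + δ + v) s *
          shiftedFac f δ (u + δ - v) s * shiftedFac f δ (2 * u + ((M : ℂ) + 1) * δ) s *
          (shiftedFac f δ (2 * u + δ) M * shiftedFac f δ δ M) *
          ∏ l ∈ (Finset.range (M + 1)).erase s, Ep f v (u + (l : ℂ) * δ) := by
  have hcard : ((Finset.range (M + 1)).erase s).card = M := by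
    rw [Finset.card_erase_of_mem (Finset.mem_range.mpr (by omega)), Finset.card_range]
    omega
  have hG1 : ∏ l ∈ (Finset.range (M + 1)).erase s, Ep f (u + s * δ) (u + (l : ℂ) * δ)
      = (∏ l ∈ (Finset.range (M + 1)).erase s, f (2 * u + ((s : ℂ) + l) * δ)) *
          ∏ l ∈ (Finset.range (M + 1)).erase s, f (((s : ℂ) - l) * δ) := by
    rw [← Finset.prod_mul_distrib]
    refine Finset.prod_congr rfl fun l _ => ?_
    unfold Ep; congr 2 <;> ring
  have hG2 : ∏ l ∈ (Finset.range (M + 1)).erase s, Ep f v (u + (l : ℂ) * δ)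
      = (∏ l ∈ (Finset.range (M + 1)).erase s, f (u + v + (l : ℂ) * δ)) *
          ((-1) ^ M * ∏ l ∈ (Finset.range (M + 1)).erase s, f (u + -v + (l : ℂ) * δ)) := by
    have : ∀ l ∈ (Finset.range (M + 1)).erase s,
        Ep f v (u + (l : ℂ) * δ) = f (u + v + (l : ℂ) * δ) * (-1 * f (u + -v + (l : ℂ) * δ)) := by
      intro l _
      unfold Ep
      have e1 : v + (u + (l : ℂ) * δ) = u + v + (l : ℂ) * δ := by ring
      have e2 : v - (u + (l : ℂ) * δ) = -(u + -v + (l : ℂ) * δ) := by ring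
      rw [e1, e2, hodd]; ring
    rw [Finset.prod_congr rfl this, Finset.prod_mul_distrib, Finset.prod_mul_distrib,
      Finset.prod_const, hcard]
  have e2 := upart (f := f) (δ := δ) u hs
  have e1 := dpart (f := f) (δ := δ) hodd hs
  have e3 := vpart (f := f) (δ := δ) u v hs
  have e4 := vpart (f := f) (δ := δ) u (-v) hs
  rw [sf_congr f δ s (show u + -v = u - v by ring),
    sf_congr f δ M (show u + δ + -v = u + δ - v by ring)] at e4
  rw [hG1, hG2]
  linear_combination
    (shiftedFac f δ (u + v) s * shiftedFac f δ (u + δ + v) M *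
      (shiftedFac f δ (u - v) s * shiftedFac f δ (u + δ - v) M) *
      (shiftedFac f δ (-(M : ℂ) * δ) s *
        ∏ l ∈ (Finset.range (M + 1)).erase s, f (((s : ℂ) - l) * δ))) * e2 +
    (f (2 * u) * shiftedFac f δ (2 * u + ((M : ℂ) + 1) * δ) s * shiftedFac f δ (2 * u + δ) M *
      (shiftedFac f δ (u + v) s * shiftedFac f δ (u + δ + v) M) *
      (shiftedFac f δ (u - v) s * shiftedFac f δ (u + δ - v) M)) * e1 +
    (f (2 * u) * shiftedFac f δ (2 * u + ((M : ℂ) + 1) * δ) s * shiftedFac f δ (2 * u + δ) M *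
      ((-1) ^ M * shiftedFac f δ δ s * shiftedFac f δ δ M) *
      (shiftedFac f δ (u - v) s * shiftedFac f δ (u + δ - v) M)) * e3 +
    (f (2 * u) * shiftedFac f δ (2 * u + ((M : ℂ) + 1) * δ) s * shiftedFac f δ (2 * u + δ) M *
      ((-1) ^ M * shiftedFac f δ δ s * shiftedFac f δ δ M) *
      (shiftedFac f δ (u + δ + v) s *
        ∏ l ∈ (Finset.range (M + 1)).erase s, f (u + v + (l : ℂ) * δ))) * e4

theorem sf_cross (f : ℂ → ℂ) (δ a : ℂ) (n k : ℕ) :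
    shiftedFac f δ (a + n * δ) k * shiftedFac f δ a n
      = shiftedFac f δ (a + k * δ) n * shiftedFac f δ a k := by
  rw [mul_comm, ← sf_add, mul_comm, ← sf_add, Nat.add_comm]

theorem f_zero (hodd : ∀ u : ℂ, f (-u) = -f u) : f 0 = 0 := by
  have h := hodd 0
  rw [neg_zero] at h
  have h2 : (2:ℂ) * f 0 = 0 := by linear_combination h
  have := mul_eq_zero.mp h2
  simpa using this


theorem expand (hR : ∀ x y u v : ℂ,
      f (x + u) * f (x - u) * (f (y + v) * f (y - v)) -
        f (x + v) * f (x - v) * (f (y + u) * f (y - u)) =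
      f (x + y) * f (x - y) * (f (u + v) * f (u - v)))
    (u : ℂ) (M : ℕ)
    (h1 : ∀ j : ℕ, 1 ≤ j → j ≤ M → f ((j : ℂ) * δ) ≠ 0)
    (h2 : ∀ j : ℕ, 1 ≤ j → j ≤ 2 * M → f (2 * u + (j : ℂ) * δ) ≠ 0)
    (A : Multiset ℂ) :
    ∀ S : Finset ℕ, S ⊆ Finset.range (M + 1) → Multiset.card A + S.card = M →
    ∃ lam : ℕ → ℂ, ∀ w : ℂ,
      (A.map (fun a => Ep f w a)).prod * ∏ l ∈ S, Ep f w (u + (l : ℂ) * δ)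
        = ∑ s ∈ Finset.range (M + 1), lam s *
            ∏ l ∈ (Finset.range (M + 1)).erase s, Ep f w (u + (l : ℂ) * δ) := by
  induction A using Multiset.induction_on with
  | empty =>
    intro S hS hcard
    simp only [Multiset.card_zero, zero_add] at hcard
    have hd : ((Finset.range (M + 1)) \ S).card = 1 := by
      rw [Finset.card_sdiff_of_subset hS, Finset.card_range, hcard]; omega
    obtain ⟨s₀, hs₀⟩ := Finset.card_eq_one.mp hd
    have hs₀mem : s₀ ∈ Finset.range (M + 1) := by
      have : s₀ ∈ Finset.range (M + 1) \ S := by rw [hs₀]; exact Finset.mem_singleton_self _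
      exact (Finset.mem_sdiff.mp this).1
    have hSeq : S = (Finset.range (M + 1)).erase s₀ := by
      have h1' : S = Finset.range (M + 1) \ (Finset.range (M + 1) \ S) :=
        (Finset.sdiff_sdiff_eq_self hS).symm
      rw [hs₀] at h1'
      rw [h1', Finset.sdiff_singleton_eq_erase]
    refine ⟨fun s => if s = s₀ then 1 else 0, fun w => ?_⟩
    rw [Finset.sum_eq_single s₀]
    · simp [hSeq]
    · intro b _ hb; simp [hb]
    · intro h; exact absurd hs₀mem h
  | cons a A ih =>
    intro S hS hcard
    simp only [Multiset.card_cons] at hcard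
    have hc2 : 2 ≤ ((Finset.range (M + 1)) \ S).card := by
      rw [Finset.card_sdiff_of_subset hS, Finset.card_range]; omega
    obtain ⟨l₁, hl₁, l₂, hl₂, hne⟩ := Finset.one_lt_card.mp (show 1 < ((Finset.range (M + 1)) \ S).card by omega)
    suffices key : ∀ p q : ℕ, p ∈ Finset.range (M + 1) \ S → q ∈ Finset.range (M + 1) \ S →
        p < q →
        ∃ lam : ℕ → ℂ, ∀ w : ℂ,
          ((a ::ₘ A).map (fun a => Ep f w a)).prod * ∏ l ∈ S, Ep f w (u + (l : ℂ) * δ)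
            = ∑ s ∈ Finset.range (M + 1), lam s *
                ∏ l ∈ (Finset.range (M + 1)).erase s, Ep f w (u + (l : ℂ) * δ) by
      rcases hne.lt_or_gt with h | h
      · exact key l₁ l₂ hl₁ hl₂ h
      · exact key l₂ l₁ hl₂ hl₁ h
    intro p q hp hq hpq
    obtain ⟨hpr, hpS⟩ := Finset.mem_sdiff.mp hp
    obtain ⟨hqr, hqS⟩ := Finset.mem_sdiff.mp hq
    have hpM : p ≤ M := by have := Finset.mem_range.mp hpr; omega
    have hqM : q ≤ M := by have := Finset.mem_range.mp hqr; omega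
    have hD : Ep f (u + (q : ℂ) * δ) (u + (p : ℂ) * δ) ≠ 0 := by
      have e1 : (u + (q : ℂ) * δ) + (u + (p : ℂ) * δ) = 2 * u + ((p + q : ℕ) : ℂ) * δ := by
        push_cast; ring
      have e2 : (u + (q : ℂ) * δ) - (u + (p : ℂ) * δ) = ((q - p : ℕ) : ℂ) * δ := by
        rw [Nat.cast_sub hpq.le]; push_cast; ring
      unfold Ep; rw [e1, e2]
      exact mul_ne_zero (h2 _ (by omega) (by omega)) (h1 _ (by omega) (by omega))
    obtain ⟨lam₁, hlam₁⟩ := ih (insert p S)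
      (Finset.insert_subset hpr hS)
      (by rw [Finset.card_insert_of_notMem hpS]; omega)
    obtain ⟨lam₂, hlam₂⟩ := ih (insert q S)
      (Finset.insert_subset hqr hS)
      (by rw [Finset.card_insert_of_notMem hqS]; omega)
    set D := Ep f (u + (q : ℂ) * δ) (u + (p : ℂ) * δ) with hDdef
    refine ⟨fun s => (Ep f (u + (q : ℂ) * δ) a / D) * lam₁ s
      + (Ep f a (u + (p : ℂ) * δ) / D) * lam₂ s, fun w => ?_⟩
    have hRkey : Ep f w a * D
        = Ep f w (u + (p : ℂ) * δ) * Ep f (u + (q : ℂ) * δ) a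
          + Ep f w (u + (q : ℂ) * δ) * Ep f a (u + (p : ℂ) * δ) := by
      have h := hR w (u + (q : ℂ) * δ) a (u + (p : ℂ) * δ)
      simp only [hDdef, Ep]
      linear_combination h
    have expand_a : Ep f w a * ((A.map (fun a => Ep f w a)).prod
          * ∏ l ∈ S, Ep f w (u + (l : ℂ) * δ))
        = (Ep f (u + (q : ℂ) * δ) a / D) * ((A.map (fun a => Ep f w a)).prod
            * ∏ l ∈ insert p S, Ep f w (u + (l : ℂ) * δ))
          + (Ep f a (u + (p : ℂ) * δ) / D) * ((A.map (fun a => Ep f w a)).prod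
            * ∏ l ∈ insert q S, Ep f w (u + (l : ℂ) * δ)) := by
      rw [Finset.prod_insert hpS, Finset.prod_insert hqS]
      rw [div_mul_eq_mul_div, div_mul_eq_mul_div, ← add_div, eq_div_iff hD]
      linear_combination ((A.map (fun a => Ep f w a)).prod
        * ∏ l ∈ S, Ep f w (u + (l : ℂ) * δ)) * hRkey
    rw [Multiset.map_cons, Multiset.prod_cons, mul_assoc, expand_a, hlam₁ w, hlam₂ w,
      Finset.mul_sum, Finset.mul_sum, ← Finset.sum_add_distrib]
    exact Finset.sum_congr rfl fun s _ => by ring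

theorem sf_shift1 (f : ℂ → ℂ) (δ w c : ℂ) (n : ℕ) :
    shiftedFac f δ (w + c) n = ∏ r ∈ Finset.range n, f (w + (c + (r : ℂ) * δ)) :=
  Finset.prod_congr rfl fun r _ => by congr 1; ring

theorem sf_shift2 (f : ℂ → ℂ) (δ w c : ℂ) (n : ℕ) :
    shiftedFac f δ (w - c - n * δ + δ) n = ∏ r ∈ Finset.range n, f (w - (c + (r : ℂ) * δ)) := by
  unfold shiftedFac
  rw [← Finset.prod_range_reflect (fun r => f (w - (c + (r : ℂ) * δ))) n]
  refine Finset.prod_congr rfl fun r hr => ?_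
  rw [Finset.mem_range] at hr
  have h1 : ((n - 1 - r : ℕ) : ℂ) = (n : ℂ) - 1 - r := by
    have e : n - 1 - r = n - (1 + r) := by omega
    rw [e, Nat.cast_sub (by omega)]; push_cast; ring
  congr 1; rw [h1]; ring

theorem gt_eq (f : ℂ → ℂ) (δ c w : ℂ) (n : ℕ) :
    shiftedFac f δ (w + c) n * shiftedFac f δ (w - c - n * δ + δ) n = gt f δ c w n := by
  rw [sf_shift1, sf_shift2, ← Finset.prod_mul_distrib]
  rfl

theorem gt_eq' (hodd : ∀ u : ℂ, f (-u) = -f u) (c w : ℂ) (n : ℕ) :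
    shiftedFac f δ (c + w) n * shiftedFac f δ (c - w) n = (-1) ^ n * gt f δ c w n := by
  have e1 : shiftedFac f δ (c + w) n = ∏ r ∈ Finset.range n, f (w + (c + (r : ℂ) * δ)) :=
    Finset.prod_congr rfl fun r _ => by congr 1; ring
  have e2 : shiftedFac f δ (c - w) n
      = ∏ r ∈ Finset.range n, (-1 * f (w - (c + (r : ℂ) * δ))) := by
    refine Finset.prod_congr rfl fun r _ => ?_
    have h : c - w + (r : ℂ) * δ = -(w - (c + (r : ℂ) * δ)) := by ring
    rw [h, hodd]; ring
  rw [e1, e2, Finset.prod_mul_distrib, Finset.prod_const, Finset.card_range]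
  have : gt f δ c w n = (∏ r ∈ Finset.range n, f (w + (c + (r : ℂ) * δ))) *
      ∏ r ∈ Finset.range n, f (w - (c + (r : ℂ) * δ)) := by
    unfold gt Ep; rw [← Finset.prod_mul_distrib]
  rw [this]; ring

theorem prod_split (f : ℂ → ℂ) (δ u v : ℂ) (m M : ℕ) (x : Fin m → ℂ) (α : Fin m → ℕ) (k : ℕ) :
    (∏ i, shiftedFac f δ ((KMargs δ u v x α M) i) k /
        shiftedFac f δ (δ + 2 * u - (KMargs δ u v x α M) i) k)
    = ((shiftedFac f δ (u + v) k / shiftedFac f δ (δ + 2 * u - (u + v)) k) *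
        (shiftedFac f δ (u - v) k / shiftedFac f δ (δ + 2 * u - (u - v)) k)) *
      ((∏ i : Fin m,
          (shiftedFac f δ (u + δ / 2 + x i + (α i : ℂ) * δ) k /
            shiftedFac f δ (δ + 2 * u - (u + δ / 2 + x i + (α i : ℂ) * δ)) k) *
          (shiftedFac f δ (u + δ / 2 - x i) k /
            shiftedFac f δ (δ + 2 * u - (u + δ / 2 - x i)) k)) *
        (shiftedFac f δ (-(M : ℂ) * δ) k /
          shiftedFac f δ (δ + 2 * u - (-(M : ℂ) * δ)) k)) := by
  rw [Fintype.prod_sum_type, Fintype.prod_sum_type, Fintype.prod_prod_type]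
  simp only [KMargs, Sum.elim_inl, Sum.elim_inr, Fin.prod_univ_two, Fin.prod_univ_one,
    Matrix.cons_val_zero, Matrix.cons_val_one, Matrix.head_cons, Fin.isValue,
    if_pos, one_ne_zero, if_false]
theorem main_generic (f : ℂ → ℂ)
    (hodd : ∀ u : ℂ, f (-u) = -f u)
    (hR : ∀ x y u v : ℂ,
      f (x + u) * f (x - u) * (f (y + v) * f (y - v)) -
        f (x + v) * f (x - v) * (f (y + u) * f (y - u)) =
      f (x + y) * f (x - y) * (f (u + v) * f (u - v)))
    (δ : ℂ) (m M : ℕ)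
    (x : Fin m → ℂ) (α : Fin m → ℕ) (hM : ∑ i, α i = M)
    (u v : ℂ)
    (hu0 : f (2 * u) ≠ 0)
    (hδk : ∀ k : ℕ, k ≤ M → shiftedFac f δ δ k ≠ 0)
    (hden : ∀ (i : Fin 2 ⊕ (Fin m × Fin 2) ⊕ Fin 1) (k : ℕ), k ≤ M →
      shiftedFac f δ (δ + 2 * u - KMargs δ u v x α M i) k ≠ 0)
    (hduv1 : shiftedFac f δ (u + δ + v) M ≠ 0)
    (hduv2 : shiftedFac f δ (u + δ - v) M ≠ 0)
    (hdxu : ∀ i : Fin m, shiftedFac f δ (x i + δ / 2 + u) (α i) ≠ 0 ∧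
      shiftedFac f δ (x i + δ / 2 - u) (α i) ≠ 0)
    (h2 : ∀ j : ℕ, 1 ≤ j → j ≤ 2 * M → f (2 * u + (j : ℂ) * δ) ≠ 0) :
    Vseries f δ M (2 * u) (KMargs δ u v x α M) =
      shiftedFac f δ (u + δ + u) M * shiftedFac f δ (u + δ - u) M /
          (shiftedFac f δ (u + δ + v) M * shiftedFac f δ (u + δ - v) M) *
        ∏ i, shiftedFac f δ (x i + δ / 2 + v) (α i) *
            shiftedFac f δ (x i + δ / 2 - v) (α i) /
          (shiftedFac f δ (x i + δ / 2 + u) (α i) *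
            shiftedFac f δ (x i + δ / 2 - u) (α i)) := by
  classical
  -- basic nonvanishing
  have h1 : ∀ j : ℕ, 1 ≤ j → j ≤ M → f ((j : ℂ) * δ) ≠ 0 := by
    intro j hj1 hjM
    have hj := hδk j hjM
    unfold shiftedFac at hj
    have := Finset.prod_ne_zero_iff.mp hj (j - 1) (Finset.mem_range.mpr (by omega))
    have e : δ + ((j - 1 : ℕ) : ℂ) * δ = (j : ℂ) * δ := by
      rw [Nat.cast_sub (by omega)]; push_cast; ring
    rwa [e] at this
  have hαM : ∀ i, α i ≤ M := fun i =>
    hM ▸ Finset.single_le_sum (fun _ _ => Nat.zero_le _) (Finset.mem_univ i)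
  -- the multiset of interpolation data
  set A : Multiset ℂ := Multiset.bind Finset.univ.val
    (fun i : Fin m => Multiset.map (fun r : ℕ => x i + δ / 2 + (r : ℂ) * δ)
      (Multiset.range (α i))) with hA
  have hAcard : Multiset.card A = M := by
    rw [hA, Multiset.card_bind]
    simp only [Multiset.map_map, Function.comp]
    rw [← hM, ← Finset.sum_eq_multiset_sum]  -- might need adjusting
    simp
  have hgfun : ∀ w : ℂ, (A.map (fun a => Ep f w a)).prod
      = ∏ i, gt f δ (x i + δ / 2) w (α i) := by
    intro w
    rw [hA, Multiset.map_bind, Multiset.prod_bind]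
    rw [Finset.prod_eq_multiset_prod]
    congr 1
    refine Multiset.map_congr rfl fun i _ => ?_
    rw [Multiset.map_map]
    unfold gt
    rw [Finset.prod_eq_multiset_prod, Finset.range_val]
    rfl
  obtain ⟨lam, hlam⟩ := expand hR u M h1 h2 A ∅ (Finset.empty_subset _)
    (by rw [hAcard]; simp)
  have hexp : ∀ w : ℂ, (∏ i, gt f δ (x i + δ / 2) w (α i))
      = ∑ s ∈ Finset.range (M + 1), lam s *
          ∏ l ∈ (Finset.range (M + 1)).erase s, Ep f w (u + (l : ℂ) * δ) := by
    intro w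
    rw [← hgfun w]
    have := hlam w
    simpa using this

  -- nonvanishing of the pair denominators, transported
  have hd1 : ∀ i : Fin m, ∀ k ≤ M, shiftedFac f δ (u + (x i + δ / 2)) k ≠ 0 := by
    intro i k hk
    have h := hden (Sum.inr (Sum.inl (i, 1))) k hk
    simp only [KMargs, Sum.elim_inl, Sum.elim_inr, Fin.isValue, one_ne_zero, if_false] at h
    rwa [sf_congr f δ k (show δ + 2 * u - (u + δ / 2 - x i) = u + (x i + δ / 2) by ring)] at h
  have hd2 : ∀ i : Fin m, ∀ k ≤ M,
      shiftedFac f δ (u - (x i + δ / 2) - (α i : ℂ) * δ + δ) k ≠ 0 := by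
    intro i k hk
    have h := hden (Sum.inr (Sum.inl (i, 0))) k hk
    simp only [KMargs, Sum.elim_inl, Sum.elim_inr, Fin.isValue, if_pos] at h
    rwa [sf_congr f δ k (show δ + 2 * u - (u + δ / 2 + x i + (α i : ℂ) * δ)
      = u - (x i + δ / 2) - (α i : ℂ) * δ + δ by ring)] at h
  have hgtu : ∀ i : Fin m, gt f δ (x i + δ / 2) u (α i) ≠ 0 := by
    intro i
    rw [← gt_eq f δ (x i + δ / 2) u (α i)]
    exact mul_ne_zero (hd1 i (α i) (hαM i)) (hd2 i (α i) (hαM i))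
  set GU : ℂ := ∏ i, gt f δ (x i + δ / 2) u (α i) with hGUdef
  have hGUne : GU ≠ 0 := Finset.prod_ne_zero_iff.mpr fun i _ => hgtu i
  have hduv1' : ∀ k ≤ M, shiftedFac f δ (u + δ + v) k ≠ 0 := by
    intro k hk
    have h := hden (Sum.inl 1) k hk
    simp only [KMargs, Sum.elim_inl, Matrix.cons_val_one, Matrix.head_cons, Matrix.cons_val_zero] at h
    rwa [sf_congr f δ k (show δ + 2 * u - (u - v) = u + δ + v by ring)] at h
  have hduv2' : ∀ k ≤ M, shiftedFac f δ (u + δ - v) k ≠ 0 := by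
    intro k hk
    have h := hden (Sum.inl 0) k hk
    simp only [KMargs, Sum.elim_inl, Matrix.cons_val_zero] at h
    rwa [sf_congr f δ k (show δ + 2 * u - (u + v) = u + δ - v by ring)] at h
  have hdM : ∀ k ≤ M, shiftedFac f δ (2 * u + ((M : ℂ) + 1) * δ) k ≠ 0 := by
    intro k hk
    have h := hden (Sum.inr (Sum.inr 0)) k hk
    simp only [KMargs, Sum.elim_inr, Matrix.cons_val_zero] at h
    rwa [sf_congr f δ k (show δ + 2 * u - (-(M : ℂ) * δ) = 2 * u + ((M : ℂ) + 1) * δ by ring)] at h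
  -- rewrite each term of the series
  have hterm : ∀ k ∈ Finset.range (M + 1),
      (f (2 * u + 2 * (k : ℂ) * δ) / f (2 * u)) *
          (shiftedFac f δ (2 * u) k / shiftedFac f δ δ k) *
          ∏ i, shiftedFac f δ ((KMargs δ u v x α M) i) k /
            shiftedFac f δ (δ + 2 * u - (KMargs δ u v x α M) i) k
        = (f (2 * u + 2 * (k : ℂ) * δ) * shiftedFac f δ (2 * u) k * shiftedFac f δ (u + v) k *
              shiftedFac f δ (u - v) k * shiftedFac f δ (-(M : ℂ) * δ) k *
              ∏ i, gt f δ (x i + δ / 2) (u + (k : ℂ) * δ) (α i)) /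
            (f (2 * u) * shiftedFac f δ δ k * shiftedFac f δ (u + δ + v) k *
              shiftedFac f δ (u + δ - v) k * shiftedFac f δ (2 * u + ((M : ℂ) + 1) * δ) k * GU) := by
    intro k hk
    have hkM : k ≤ M := by have := Finset.mem_range.mp hk; omega
    rw [prod_split]
    rw [sf_congr f δ k (show δ + 2 * u - (u + v) = u + δ - v by ring),
      sf_congr f δ k (show δ + 2 * u - (u - v) = u + δ + v by ring),
      sf_congr f δ k (show δ + 2 * u - (-(M : ℂ) * δ) = 2 * u + ((M : ℂ) + 1) * δ by ring)]
    have hpair : ∀ i : Fin m,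
        (shiftedFac f δ (u + δ / 2 + x i + (α i : ℂ) * δ) k /
            shiftedFac f δ (δ + 2 * u - (u + δ / 2 + x i + (α i : ℂ) * δ)) k) *
          (shiftedFac f δ (u + δ / 2 - x i) k /
            shiftedFac f δ (δ + 2 * u - (u + δ / 2 - x i)) k)
        = gt f δ (x i + δ / 2) (u + (k : ℂ) * δ) (α i) / gt f δ (x i + δ / 2) u (α i) := by
      intro i
      set c : ℂ := x i + δ / 2 with hc
      set n : ℕ := α i with hn
      have hB : δ + 2 * u - (u + δ / 2 + x i + (n : ℂ) * δ) = u - c - (n : ℂ) * δ + δ := by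
        rw [hc]; ring
      have hC : δ + 2 * u - (u + δ / 2 - x i) = u + c := by rw [hc]; ring
      rw [hB, hC]
      rw [sf_congr f δ k (show u + δ / 2 + x i + (n : ℂ) * δ = (u + c) + (n : ℂ) * δ by
        rw [hc]; ring)]
      rw [sf_congr f δ k (show u + δ / 2 - x i = (u - c - (n : ℂ) * δ + δ) + (n : ℂ) * δ by
        rw [hc]; ring)]
      rw [← gt_eq f δ c (u + (k : ℂ) * δ) n, ← gt_eq f δ c u n]
      rw [sf_congr f δ n (show u + (k : ℂ) * δ + c = (u + c) + (k : ℂ) * δ by ring)]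
      rw [sf_congr f δ n (show u + (k : ℂ) * δ - c - (n : ℂ) * δ + δ
        = (u - c - (n : ℂ) * δ + δ) + (k : ℂ) * δ by ring)]
      have n1 : shiftedFac f δ (u + c) k ≠ 0 := hd1 i k hkM
      have n2 : shiftedFac f δ (u - c - (n : ℂ) * δ + δ) k ≠ 0 := hd2 i k hkM
      have n3 : shiftedFac f δ (u + c) n ≠ 0 := hd1 i n (hαM i)
      have n4 : shiftedFac f δ (u - c - (n : ℂ) * δ + δ) n ≠ 0 := hd2 i n (hαM i)
      rw [div_mul_div_comm, div_eq_div_iff (mul_ne_zero n2 n1) (mul_ne_zero n3 n4)]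
      have cross1 := sf_cross f δ (u + c) n k
      have cross2 := sf_cross f δ (u - c - (n : ℂ) * δ + δ) n k
      linear_combination (shiftedFac f δ ((u - c - (n : ℂ) * δ + δ) + (n : ℂ) * δ) k *
          shiftedFac f δ (u - c - (n : ℂ) * δ + δ) n) * cross1 +
        (shiftedFac f δ ((u + c) + (k : ℂ) * δ) n * shiftedFac f δ (u + c) k) * cross2
    rw [Finset.prod_congr rfl fun i _ => hpair i, Finset.prod_div_distrib]
    have n5 : shiftedFac f δ δ k ≠ 0 := hδk k hkM
    have n6 : shiftedFac f δ (u + δ + v) k ≠ 0 := hduv1' k hkM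
    have n7 : shiftedFac f δ (u + δ - v) k ≠ 0 := hduv2' k hkM
    have n8 : shiftedFac f δ (2 * u + ((M : ℂ) + 1) * δ) k ≠ 0 := hdM k hkM
    rw [← hGUdef]
    rw [div_mul_div_comm, div_mul_div_comm, div_mul_div_comm, div_mul_div_comm,
      div_mul_div_comm]
    congr 1 <;> ring
  unfold Vseries
  rw [Finset.sum_congr rfl hterm]
  -- expand `∏ gt` and swap sums
  have hGz : ∀ s k : ℕ, k ∈ Finset.range (M + 1) → k ≠ s →
      ∏ l ∈ (Finset.range (M + 1)).erase s, Ep f (u + (k : ℂ) * δ) (u + (l : ℂ) * δ) = 0 := by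
    intro s k hk hne
    refine Finset.prod_eq_zero (Finset.mem_erase.mpr ⟨hne, hk⟩) ?_
    unfold Ep
    rw [sub_self, f_zero hodd, mul_zero]
  have step2 : ∑ k ∈ Finset.range (M + 1),
      (f (2 * u + 2 * (k : ℂ) * δ) * shiftedFac f δ (2 * u) k * shiftedFac f δ (u + v) k *
          shiftedFac f δ (u - v) k * shiftedFac f δ (-(M : ℂ) * δ) k *
          ∏ i, gt f δ (x i + δ / 2) (u + (k : ℂ) * δ) (α i)) /
        (f (2 * u) * shiftedFac f δ δ k * shiftedFac f δ (u + δ + v) k *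
          shiftedFac f δ (u + δ - v) k * shiftedFac f δ (2 * u + ((M : ℂ) + 1) * δ) k * GU)
      = ∑ s ∈ Finset.range (M + 1), lam s *
          ((f (2 * u + 2 * (s : ℂ) * δ) * shiftedFac f δ (2 * u) s * shiftedFac f δ (u + v) s *
              shiftedFac f δ (u - v) s * shiftedFac f δ (-(M : ℂ) * δ) s *
              ∏ l ∈ (Finset.range (M + 1)).erase s, Ep f (u + (s : ℂ) * δ) (u + (l : ℂ) * δ)) /
            (f (2 * u) * shiftedFac f δ δ s * shiftedFac f δ (u + δ + v) s *
              shiftedFac f δ (u + δ - v) s * shiftedFac f δ (2 * u + ((M : ℂ) + 1) * δ) s * GU)) := by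
    have inner : ∀ k ∈ Finset.range (M + 1),
        (f (2 * u + 2 * (k : ℂ) * δ) * shiftedFac f δ (2 * u) k * shiftedFac f δ (u + v) k *
            shiftedFac f δ (u - v) k * shiftedFac f δ (-(M : ℂ) * δ) k *
            ∏ i, gt f δ (x i + δ / 2) (u + (k : ℂ) * δ) (α i)) /
          (f (2 * u) * shiftedFac f δ δ k * shiftedFac f δ (u + δ + v) k *
            shiftedFac f δ (u + δ - v) k * shiftedFac f δ (2 * u + ((M : ℂ) + 1) * δ) k * GU)
        = ∑ s ∈ Finset.range (M + 1), lam s *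
            ((f (2 * u + 2 * (k : ℂ) * δ) * shiftedFac f δ (2 * u) k * shiftedFac f δ (u + v) k *
                shiftedFac f δ (u - v) k * shiftedFac f δ (-(M : ℂ) * δ) k *
                ∏ l ∈ (Finset.range (M + 1)).erase s, Ep f (u + (k : ℂ) * δ) (u + (l : ℂ) * δ)) /
              (f (2 * u) * shiftedFac f δ δ k * shiftedFac f δ (u + δ + v) k *
                shiftedFac f δ (u + δ - v) k * shiftedFac f δ (2 * u + ((M : ℂ) + 1) * δ) k * GU)) := by
      intro k _
      rw [hexp (u + (k : ℂ) * δ), Finset.mul_sum, Finset.sum_div]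
      refine Finset.sum_congr rfl fun s _ => ?_
      ring
    rw [Finset.sum_congr rfl inner, Finset.sum_comm]
    refine Finset.sum_congr rfl fun s hs => ?_
    refine Finset.sum_eq_single s (fun b hb hbs => ?_) (fun hs' => absurd hs hs')
    rw [hGz s b hb hbs, mul_zero, zero_div, mul_zero]
  rw [step2]
  -- apply the closed-form per-s evaluation
  have hs_id : ∀ s ∈ Finset.range (M + 1),
      lam s * ((f (2 * u + 2 * (s : ℂ) * δ) * shiftedFac f δ (2 * u) s *
          shiftedFac f δ (u + v) s * shiftedFac f δ (u - v) s *
          shiftedFac f δ (-(M : ℂ) * δ) s *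
          ∏ l ∈ (Finset.range (M + 1)).erase s, Ep f (u + (s : ℂ) * δ) (u + (l : ℂ) * δ)) /
        (f (2 * u) * shiftedFac f δ δ s * shiftedFac f δ (u + δ + v) s *
          shiftedFac f δ (u + δ - v) s * shiftedFac f δ (2 * u + ((M : ℂ) + 1) * δ) s * GU))
      = lam s * ((shiftedFac f δ (2 * u + δ) M * shiftedFac f δ δ M *
          ∏ l ∈ (Finset.range (M + 1)).erase s, Ep f v (u + (l : ℂ) * δ)) /
        (shiftedFac f δ (u + δ + v) M * shiftedFac f δ (u + δ - v) M * GU)) := by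
    intro s hs
    have hsM : s ≤ M := by have := Finset.mem_range.mp hs; omega
    congr 1
    have hD1 : f (2 * u) * shiftedFac f δ δ s * shiftedFac f δ (u + δ + v) s *
        shiftedFac f δ (u + δ - v) s * shiftedFac f δ (2 * u + ((M : ℂ) + 1) * δ) s * GU ≠ 0 := by
      exact mul_ne_zero (mul_ne_zero (mul_ne_zero (mul_ne_zero (mul_ne_zero hu0 (hδk s hsM))
        (hduv1' s hsM)) (hduv2' s hsM)) (hdM s hsM)) hGUne
    have hD2 : shiftedFac f δ (u + δ + v) M * shiftedFac f δ (u + δ - v) M * GU ≠ 0 :=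
      mul_ne_zero (mul_ne_zero hduv1 hduv2) hGUne
    rw [div_eq_div_iff hD1 hD2]
    linear_combination GU * claimD (f := f) (δ := δ) hodd u v hsM
  rw [Finset.sum_congr rfl hs_id]
  -- sum back up and compare with the right-hand side
  have hfin : ∑ s ∈ Finset.range (M + 1), lam s *
      ((shiftedFac f δ (2 * u + δ) M * shiftedFac f δ δ M *
          ∏ l ∈ (Finset.range (M + 1)).erase s, Ep f v (u + (l : ℂ) * δ)) /
        (shiftedFac f δ (u + δ + v) M * shiftedFac f δ (u + δ - v) M * GU))
      = (shiftedFac f δ (2 * u + δ) M * shiftedFac f δ δ M *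
          ∏ i, gt f δ (x i + δ / 2) v (α i)) /
        (shiftedFac f δ (u + δ + v) M * shiftedFac f δ (u + δ - v) M * GU) := by
    rw [hexp v, Finset.mul_sum, Finset.sum_div]
    refine Finset.sum_congr rfl fun s _ => ?_
    rw [mul_div_assoc, mul_div_assoc]
    ring
  rw [hfin]
  -- right-hand side
  have hrhsi : ∀ i : Fin m,
      shiftedFac f δ (x i + δ / 2 + v) (α i) * shiftedFac f δ (x i + δ / 2 - v) (α i) /
        (shiftedFac f δ (x i + δ / 2 + u) (α i) * shiftedFac f δ (x i + δ / 2 - u) (α i))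
      = gt f δ (x i + δ / 2) v (α i) / gt f δ (x i + δ / 2) u (α i) := by
    intro i
    rw [gt_eq' hodd (x i + δ / 2) v (α i), gt_eq' hodd (x i + δ / 2) u (α i)]
    exact mul_div_mul_left _ _ (pow_ne_zero _ (neg_ne_zero.mpr one_ne_zero))
  rw [Finset.prod_congr rfl fun i _ => hrhsi i, Finset.prod_div_distrib, ← hGUdef]
  rw [sf_congr f δ M (show u + δ + u = 2 * u + δ by ring),
    sf_congr f δ M (show u + δ - u = δ by ring)]
  rw [div_mul_div_comm]

end KMaux

open Filter Topology in
/-- Elliptic Karlsson–Minton type summation (Rosengren–Schlosser):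
`_{2m+8}V_{2m+7}(2u; u+v, u-v, (u+δ/2+x_i+α_iδ, u+δ/2-x_i)_i, -Mδ)
 = ([u+δ+u]_M [u+δ-u]_M / ([u+δ+v]_M [u+δ-v]_M))
   ∏_i ([x_i+δ/2±v]_{α_i} / [x_i+δ/2±u]_{α_i})`. -/
theorem karlsson_minton_summation (f : ℂ → ℂ)
    (hne : f ≠ 0) (hent : Differentiable ℂ f)
    (hodd : ∀ u : ℂ, f (-u) = -f u)
    (hR : ∀ x y u v : ℂ,
      f (x + u) * f (x - u) * (f (y + v) * f (y - v)) -
        f (x + v) * f (x - v) * (f (y + u) * f (y - u)) =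
      f (x + y) * f (x - y) * (f (u + v) * f (u - v)))
    (δ : ℂ) (hδ : δ ≠ 0) (m M : ℕ)
    (x : Fin m → ℂ) (α : Fin m → ℕ) (hM : ∑ i, α i = M)
    (u v : ℂ)
    (hu0 : f (2 * u) ≠ 0)
    (hδk : ∀ k : ℕ, k ≤ M → shiftedFac f δ δ k ≠ 0)
    (hden : ∀ (i : Fin 2 ⊕ (Fin m × Fin 2) ⊕ Fin 1) (k : ℕ), k ≤ M →
      shiftedFac f δ (δ + 2 * u - KMargs δ u v x α M i) k ≠ 0)
    (hduv1 : shiftedFac f δ (u + δ + v) M ≠ 0)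
    (hduv2 : shiftedFac f δ (u + δ - v) M ≠ 0)
    (hdxu : ∀ i : Fin m, shiftedFac f δ (x i + δ / 2 + u) (α i) ≠ 0 ∧
      shiftedFac f δ (x i + δ / 2 - u) (α i) ≠ 0) :
    Vseries f δ M (2 * u) (KMargs δ u v x α M) =
      shiftedFac f δ (u + δ + u) M * shiftedFac f δ (u + δ - u) M /
          (shiftedFac f δ (u + δ + v) M * shiftedFac f δ (u + δ - v) M) *
        ∏ i, shiftedFac f δ (x i + δ / 2 + v) (α i) *
            shiftedFac f δ (x i + δ / 2 - v) (α i) /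
          (shiftedFac f δ (x i + δ / 2 + u) (α i) *
            shiftedFac f δ (x i + δ / 2 - u) (α i)) := by
  classical
  have hfc : Continuous f := hent.continuous
  -- continuity of shifted factorials with continuously varying argument
  have csf : ∀ (g : ℂ → ℂ), Continuous g → ∀ k : ℕ,
      Continuous fun t => shiftedFac f δ (g t) k := by
    intro g hg k
    exact continuous_finset_prod _ fun r _ => hfc.comp (hg.add continuous_const)
  have ckm : ∀ i, Continuous fun t => KMargs δ t v x α M i := by
    intro i
    rcases i with a | p | c
    · fin_cases a <;> simp [KMargs] <;> fun_prop
    · by_cases h : p.2 = 0 <;>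
        simp only [KMargs, Sum.elim_inr, Sum.elim_inl, h, if_true, if_false] <;> fun_prop
    · simp only [KMargs, Sum.elim_inr]
      exact continuous_const
  set L : ℂ → ℂ := fun t => Vseries f δ M (2 * t) (KMargs δ t v x α M) with hL
  set R : ℂ → ℂ := fun t =>
      shiftedFac f δ (t + δ + t) M * shiftedFac f δ (t + δ - t) M /
          (shiftedFac f δ (t + δ + v) M * shiftedFac f δ (t + δ - v) M) *
        ∏ i, shiftedFac f δ (x i + δ / 2 + v) (α i) *
            shiftedFac f δ (x i + δ / 2 - v) (α i) /
          (shiftedFac f δ (x i + δ / 2 + t) (α i) *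
            shiftedFac f δ (x i + δ / 2 - t) (α i)) with hRdef
  show L u = R u
  -- the identity holds generically near u
  have key : ∀ᶠ t in 𝓝[≠] u, L t = R t := by
    have E1 : ∀ᶠ t in 𝓝 u, f (2 * t) ≠ 0 :=
      ((hfc.comp (continuous_const.mul continuous_id)).continuousAt).eventually_ne hu0
    have E2 : ∀ᶠ t in 𝓝 u, ∀ (i : Fin 2 ⊕ (Fin m × Fin 2) ⊕ Fin 1), ∀ k ∈ Finset.range (M + 1),
        shiftedFac f δ (δ + 2 * t - KMargs δ t v x α M i) k ≠ 0 := by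
      rw [Filter.eventually_all]
      intro i
      rw [Filter.eventually_all_finset]
      intro k hk
      have hc : Continuous fun t => shiftedFac f δ (δ + 2 * t - KMargs δ t v x α M i) k :=
        csf _ (Continuous.sub (by fun_prop) (ckm i)) k
      exact hc.continuousAt.eventually_ne
        (hden i k (by have := Finset.mem_range.mp hk; omega))
    have E3 : ∀ᶠ t in 𝓝 u, shiftedFac f δ (t + δ + v) M ≠ 0 :=
      (csf (fun t => t + δ + v) (by fun_prop) M).continuousAt.eventually_ne hduv1
    have E4 : ∀ᶠ t in 𝓝 u, shiftedFac f δ (t + δ - v) M ≠ 0 :=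
      (csf (fun t => t + δ - v) (by fun_prop) M).continuousAt.eventually_ne hduv2
    have E5 : ∀ᶠ t in 𝓝 u, ∀ i : Fin m, shiftedFac f δ (x i + δ / 2 + t) (α i) ≠ 0 ∧
        shiftedFac f δ (x i + δ / 2 - t) (α i) ≠ 0 := by
      rw [Filter.eventually_all]
      intro i
      exact ((csf (fun t => x i + δ / 2 + t) (by fun_prop) (α i)).continuousAt.eventually_ne
        (hdxu i).1).and ((csf (fun t => x i + δ / 2 - t) (by fun_prop)
          (α i)).continuousAt.eventually_ne (hdxu i).2)
    have E6 : ∀ᶠ t in 𝓝[≠] u, ∀ j ∈ Finset.Icc 1 (2 * M), f (2 * t + (j : ℂ) * δ) ≠ 0 := by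
      rw [Filter.eventually_all_finset]
      intro j _
      have hA : AnalyticAt ℂ f (2 * u + (j : ℂ) * δ) := hent.analyticAt _
      rcases hA.eventually_eq_zero_or_eventually_ne_zero with h | h
      · exfalso
        have hzero : Set.EqOn f 0 Set.univ :=
          AnalyticOnNhd.eqOn_zero_of_preconnected_of_eventuallyEq_zero
            (fun z _ => hent.analyticAt z) isPreconnected_univ (Set.mem_univ _) h
        exact hne (funext fun z => hzero (Set.mem_univ z))
      · have T : Tendsto (fun t : ℂ => 2 * t + (j : ℂ) * δ) (𝓝[≠] u)
            (𝓝[≠] (2 * u + (j : ℂ) * δ)) := by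
          rw [tendsto_nhdsWithin_iff]
          constructor
          · exact ((Continuous.tendsto (by fun_prop) u)).mono_left nhdsWithin_le_nhds
          · refine eventually_mem_nhdsWithin.mono fun t ht => ?_
            simp only [Set.mem_compl_iff, Set.mem_singleton_iff] at ht ⊢
            intro hEq
            exact ht (mul_left_cancel₀ (two_ne_zero) (by linear_combination hEq))
        exact T.eventually h
    have Eall := (((E1.and (E2.and (E3.and (E4.and E5)))).filter_mono
      nhdsWithin_le_nhds)).and E6
    refine Eall.mono ?_
    rintro t ⟨⟨e1, e2, e3, e4, e5⟩, e6⟩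
    exact KMaux.main_generic f hodd hR δ m M x α hM t v e1 hδk
      (fun i k hk => e2 i k (Finset.mem_range.mpr (by omega))) e3 e4 e5
      (fun j hj1 hj2 => e6 j (Finset.mem_Icc.mpr ⟨hj1, hj2⟩))
  -- continuity of both sides at `u`
  have cL : Tendsto L (𝓝 u) (𝓝 (L u)) := by
    rw [hL]
    simp only [Vseries]
    refine tendsto_finset_sum _ fun k hk => ?_
    have hkM : k ≤ M := by have := Finset.mem_range.mp hk; omega
    refine Tendsto.mul (Tendsto.mul ?_ ?_) ?_
    · exact Tendsto.div (hfc.comp (by fun_prop)).continuousAt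
        (hfc.comp (by fun_prop : Continuous fun t : ℂ => 2 * t)).continuousAt hu0
    · exact Tendsto.div (csf (fun t => 2 * t) (by fun_prop) k).continuousAt
        tendsto_const_nhds (hδk k hkM)
    · refine tendsto_finset_prod _ fun i _ => ?_
      exact Tendsto.div (csf (fun t => KMargs δ t v x α M i) (ckm i) k).continuousAt
        (csf (fun t => δ + 2 * t - KMargs δ t v x α M i)
          (Continuous.sub (by fun_prop) (ckm i)) k).continuousAt (hden i k hkM)
  have cR : Tendsto R (𝓝 u) (𝓝 (R u)) := by
    rw [hRdef]
    refine Tendsto.mul ?_ ?_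
    · exact Tendsto.div (Tendsto.mul (csf (fun t => t + δ + t) (by fun_prop) M).continuousAt
        (csf (fun t => t + δ - t) (by fun_prop) M).continuousAt)
        (Tendsto.mul (csf (fun t => t + δ + v) (by fun_prop) M).continuousAt
          (csf (fun t => t + δ - v) (by fun_prop) M).continuousAt)
        (mul_ne_zero hduv1 hduv2)
    · refine tendsto_finset_prod _ fun i _ => ?_
      exact Tendsto.div tendsto_const_nhds
        (Tendsto.mul (csf (fun t => x i + δ / 2 + t) (by fun_prop) (α i)).continuousAt
          (csf (fun t => x i + δ / 2 - t) (by fun_prop) (α i)).continuousAt)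
        (mul_ne_zero (hdxu i).1 (hdxu i).2)
  have keq : L =ᶠ[𝓝[≠] u] R := key
  exact tendsto_nhds_unique (cL.mono_left nhdsWithin_le_nhds)
    (Filter.Tendsto.congr' keq.symm (cR.mono_left nhdsWithin_le_nhds))
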